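/- The function κ ↦ √(1+κ²)·K(κ) is strictly increasing on [0,1), takes the value π/2 at κ = 0, and tends to +∞ as κ → 1⁻. Consequently, for every γ̃ ∈ (0,1] there is a unique κ ∈ [0,1) satisfying γ̃ = π² / (4 K(κ)² (1+κ²)). -/

import Mathlib

open Real intervalIntegral Set Filter

/-- Complete elliptic integral of the first kind,
`K(κ) = ∫₀^{π/2} (1 − κ² sin²t)^{−1/2} dt`. -/
noncomputable def ellK (κ : ℝ) : ℝ :=
  ∫ t in (0:ℝ)..(Real.pi/2), 1 / Real.sqrt (1 - κ^2 * Real.sin t ^ 2)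

/-- Complete elliptic integral of the second kind,
`E(κ) = ∫₀^{π/2} (1 − κ² sin²t)^{1/2} dt`. -/
noncomputable def ellE (κ : ℝ) : ℝ :=
  ∫ t in (0:ℝ)..(Real.pi/2), Real.sqrt (1 - κ^2 * Real.sin t ^ 2)

lemma denom_pos {κ : ℝ} (h0 : 0 ≤ κ) (h1 : κ < 1) (t : ℝ) :
    0 < 1 - κ^2 * Real.sin t ^ 2 := by
  have h2 : κ^2 * Real.sin t ^ 2 ≤ κ^2 := mul_le_of_le_one_right (sq_nonneg κ) (Real.sin_sq_le_one t)
  have h3 : κ^2 < 1 := by nlinarith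
  linarith

lemma integrand_continuous {κ : ℝ} (h0 : 0 ≤ κ) (h1 : κ < 1) :
    Continuous fun t : ℝ => 1 / Real.sqrt (1 - κ^2 * Real.sin t ^ 2) := by
  apply continuous_const.div
  · fun_prop
  · intro t
    exact (Real.sqrt_pos.2 (denom_pos h0 h1 t)).ne'

lemma ellK_ge {κ : ℝ} (h0 : 0 ≤ κ) (h1 : κ < 1) : Real.pi / 2 ≤ ellK κ := by
  have h := Real.pi_pos
  have : (Real.pi / 2 : ℝ) = ∫ _ in (0:ℝ)..(Real.pi/2), (1:ℝ) := by simp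
  rw [this, ellK]
  apply intervalIntegral.integral_mono_on (by positivity)
    (intervalIntegrable_const) (((integrand_continuous h0 h1).continuousOn).intervalIntegrable)
  intro t _
  rw [le_div_iff₀ (Real.sqrt_pos.2 (denom_pos h0 h1 t)), one_mul]
  rw [Real.sqrt_le_one]
  nlinarith [sq_nonneg (κ * Real.sin t)]

lemma ellK_pos {κ : ℝ} (h0 : 0 ≤ κ) (h1 : κ < 1) : 0 < ellK κ :=
  lt_of_lt_of_le (by positivity) (ellK_ge h0 h1)

lemma ellK_strictMono : StrictMonoOn ellK (Set.Ico 0 1) := by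
  rintro a ⟨ha0, ha1⟩ b ⟨hb0, hb1⟩ hab
  have hpi := Real.pi_pos
  unfold ellK
  apply intervalIntegral.integral_lt_integral_of_continuousOn_of_le_of_exists_lt
    (by positivity) ((integrand_continuous ha0 ha1).continuousOn)
    ((integrand_continuous hb0 hb1).continuousOn)
  · intro x _
    have h1 : 0 < 1 - b^2 * Real.sin x ^ 2 := denom_pos hb0 hb1 x
    have hab2 : a^2 ≤ b^2 := by nlinarith
    have h2 : 1 - b^2 * Real.sin x ^ 2 ≤ 1 - a^2 * Real.sin x ^ 2 := by
      nlinarith [mul_le_mul_of_nonneg_right hab2 (sq_nonneg (Real.sin x))]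
    exact one_div_le_one_div_of_le (Real.sqrt_pos.2 h1) (Real.sqrt_le_sqrt h2)
  · refine ⟨Real.pi / 2, ⟨by positivity, le_refl _⟩, ?_⟩
    rw [Real.sin_pi_div_two]
    have h1 : 0 < 1 - b^2 * (1:ℝ)^2 := denom_pos hb0 hb1 (Real.pi/2) |>.trans_eq
      (by rw [Real.sin_pi_div_two])
    have h2 : 1 - b^2 * (1:ℝ)^2 < 1 - a^2 * (1:ℝ)^2 := by nlinarith
    exact one_div_lt_one_div_of_lt (Real.sqrt_pos.2 h1) (Real.sqrt_lt_sqrt h1.le h2)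

lemma fstat_strictMono :
    StrictMonoOn (fun κ : ℝ => Real.sqrt (1 + κ^2) * ellK κ) (Set.Ico 0 1) := by
  rintro a ha b hb hab
  have hKa := ellK_pos ha.1 ha.2
  have hKb := ellK_pos hb.1 hb.2
  have h1 : Real.sqrt (1 + a^2) * ellK a < Real.sqrt (1 + a^2) * ellK b := by
    have : (0:ℝ) < Real.sqrt (1 + a^2) := Real.sqrt_pos.2 (by positivity)
    exact mul_lt_mul_of_pos_left (ellK_strictMono ha hb hab) this
  have h2 : Real.sqrt (1 + a^2) * ellK b ≤ Real.sqrt (1 + b^2) * ellK b := by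
    gcongr
    nlinarith [ha.1, hb.1]
  show Real.sqrt (1 + a^2) * ellK a < Real.sqrt (1 + b^2) * ellK b
  linarith

lemma ellK_zero : Real.sqrt (1 + (0:ℝ)^2) * ellK 0 = Real.pi / 2 := by
  simp [ellK]

/-- FTC computation: `∫₀^{π/2} 1/√(ε² + (π/2 - t)²) dt = arsinh(π/(2ε))`. -/
lemma arsinh_integral {ε : ℝ} (hε : 0 < ε) :
    (∫ t in (0:ℝ)..(Real.pi/2), 1 / Real.sqrt (ε^2 + (Real.pi/2 - t)^2))
      = Real.arsinh ((Real.pi/2) / ε) := by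
  have key : ∀ t : ℝ, HasDerivAt (fun s => -Real.arsinh ((Real.pi/2 - s) / ε))
      (1 / Real.sqrt (ε^2 + (Real.pi/2 - t)^2)) t := by
    intro t
    have h1 : HasDerivAt (fun s : ℝ => (Real.pi/2 - s) / ε) (-1/ε) t := by
      simpa using ((hasDerivAt_id t).const_sub (Real.pi/2)).div_const ε
    have h2 := (Real.hasDerivAt_arsinh ((Real.pi/2 - t)/ε)).comp t h1
    have h3 := h2.neg
    convert h3 using 1
    · rfl
    · rfl
    · rfl
    have hsq : Real.sqrt (1 + ((Real.pi/2 - t)/ε)^2) = Real.sqrt (ε^2 + (Real.pi/2 - t)^2) / ε := by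
      rw [eq_div_iff hε.ne', ← Real.sqrt_sq hε.le]
      rw [← Real.sqrt_mul (by positivity)]
      congr 1
      field_simp
      ring_nf
      rw [Real.sq_sqrt (by positivity)]
    rw [hsq]
    have hpos : 0 < Real.sqrt (ε^2 + (Real.pi/2 - t)^2) := Real.sqrt_pos.2 (by positivity)
    field_simp
  have hcont : Continuous fun t : ℝ => 1 / Real.sqrt (ε^2 + (Real.pi/2 - t)^2) := by
    apply continuous_const.div
    · fun_prop
    · intro t
      exact (Real.sqrt_pos.2 (by positivity)).ne'
  rw [intervalIntegral.integral_eq_sub_of_hasDerivAt (fun t _ => key t)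
    (hcont.intervalIntegrable _ _)]
  simp

lemma ellK_lower {κ : ℝ} (h0 : 0 ≤ κ) (h1 : κ < 1) :
    Real.arsinh ((Real.pi/2) / Real.sqrt (1 - κ^2)) ≤ ellK κ := by
  have hpi := Real.pi_pos
  set ε := Real.sqrt (1 - κ^2) with hεdef
  have hκ2 : κ^2 < 1 := by nlinarith
  have hε : 0 < ε := Real.sqrt_pos.2 (by linarith)
  have hε2 : ε^2 = 1 - κ^2 := Real.sq_sqrt (by linarith)
  rw [← arsinh_integral hε, ellK]
  have hcont : Continuous fun t : ℝ => 1 / Real.sqrt (ε^2 + (Real.pi/2 - t)^2) := by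
    apply continuous_const.div
    · fun_prop
    · intro t
      exact (Real.sqrt_pos.2 (by positivity)).ne'
  apply intervalIntegral.integral_mono_on (by positivity)
    (hcont.intervalIntegrable _ _)
    (((integrand_continuous h0 h1).continuousOn).intervalIntegrable)
  intro t ht
  have hd : 0 < 1 - κ^2 * Real.sin t ^ 2 := denom_pos h0 h1 t
  have hcos : Real.cos t ^ 2 ≤ (Real.pi/2 - t)^2 := by
    have h2 : Real.cos t = Real.sin (Real.pi/2 - t) := (Real.sin_pi_div_two_sub t).symm
    have h3 : 0 ≤ Real.pi/2 - t := by linarith [ht.2]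
    have h4 : Real.sin (Real.pi/2 - t) ≤ Real.pi/2 - t := Real.sin_le h3
    have h5 : 0 ≤ Real.sin (Real.pi/2 - t) :=
      Real.sin_nonneg_of_nonneg_of_le_pi h3 (by linarith [ht.1])
    nlinarith
  have hle : 1 - κ^2 * Real.sin t ^ 2 ≤ ε^2 + (Real.pi/2 - t)^2 := by
    have : 1 - κ^2 * Real.sin t ^ 2 = (1 - κ^2) + κ^2 * Real.cos t ^ 2 := by
      have := Real.sin_sq_add_cos_sq t
      nlinarith
    rw [this, hε2]
    nlinarith [sq_nonneg κ, sq_nonneg (Real.cos t), hcos]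
  exact one_div_le_one_div_of_le (Real.sqrt_pos.2 hd) (Real.sqrt_le_sqrt hle)

lemma fstat_unbounded (M : ℝ) :
    ∃ κ ∈ Set.Ico (0:ℝ) 1, M ≤ Real.sqrt (1 + κ^2) * ellK κ := by
  have hpi := Real.pi_pos
  set c : ℝ := max (Real.sinh M) 1 with hc
  have hc1 : (1:ℝ) ≤ c := le_max_right _ _
  have hc0 : (0:ℝ) < c := by linarith
  set δ : ℝ := min (1/2) (Real.pi^2 / (4 * c^2)) with hδdef
  have hδpos : 0 < δ := lt_min (by norm_num) (by positivity)
  have hδle : δ ≤ 1/2 := min_le_left _ _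
  set κ : ℝ := Real.sqrt (1 - δ) with hκdef
  have hκ0 : 0 ≤ κ := Real.sqrt_nonneg _
  have hκ2 : κ^2 = 1 - δ := Real.sq_sqrt (by linarith)
  have hκ1 : κ < 1 := by
    have h := Real.sqrt_lt_sqrt (by linarith : (0:ℝ) ≤ 1 - δ) (by linarith : 1 - δ < 1)
    simpa [hκdef] using h
  refine ⟨κ, ⟨hκ0, hκ1⟩, ?_⟩
  have hK := ellK_lower hκ0 hκ1
  rw [hκ2] at hK
  have h1 : (1 - (1 - δ)) = δ := by ring
  rw [h1] at hK
  have hsδ : 0 < Real.sqrt δ := Real.sqrt_pos.2 hδpos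
  have hsδle : Real.sqrt δ ≤ Real.pi / (2 * c) := by
    rw [show Real.pi / (2 * c) = Real.sqrt ((Real.pi / (2*c))^2) by
      rw [Real.sqrt_sq (by positivity)]]
    apply Real.sqrt_le_sqrt
    have : (Real.pi / (2*c))^2 = Real.pi^2 / (4 * c^2) := by ring
    rw [this]
    exact min_le_right _ _
  have harg : c ≤ Real.pi / 2 / Real.sqrt δ := by
    rw [le_div_iff₀ hsδ]
    calc c * Real.sqrt δ ≤ c * (Real.pi / (2 * c)) := by gcongr
    _ = Real.pi / 2 := by field_simp
  have h2 : Real.sinh M ≤ Real.pi / 2 / Real.sqrt δ := le_trans (le_max_left _ _) harg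
  have h3 : M ≤ Real.arsinh (Real.pi / 2 / Real.sqrt δ) := by
    rw [← Real.arsinh_sinh M]
    exact Real.arsinh_le_arsinh.2 h2
  have h4 : ellK κ ≤ Real.sqrt (1 + κ^2) * ellK κ := by
    have hKpos := ellK_pos hκ0 hκ1
    nth_rewrite 1 [← one_mul (ellK κ)]
    gcongr
    rw [Real.one_le_sqrt]
    nlinarith
  linarith

lemma fstat_tendsto :
    Filter.Tendsto (fun κ : ℝ => Real.sqrt (1 + κ^2) * ellK κ)
      (nhdsWithin 1 (Set.Iio 1)) Filter.atTop := by
  rw [tendsto_atTop]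
  intro M
  obtain ⟨κ₀, hκ₀, hM⟩ := fstat_unbounded M
  filter_upwards [Ioo_mem_nhdsLT_of_mem (by constructor <;> [exact hκ₀.2; rfl] : (1:ℝ) ∈ Set.Ioc κ₀ 1)] with κ hκ
  have hκIco : κ ∈ Set.Ico (0:ℝ) 1 := ⟨le_trans hκ₀.1 hκ.1.le, hκ.2⟩
  exact le_of_lt (lt_of_le_of_lt hM (fstat_strictMono hκ₀ hκIco hκ.1))

lemma ellK_continuousOn {b : ℝ} (hb0 : 0 ≤ b) (hb1 : b < 1) :
    ContinuousOn ellK (Set.Icc 0 b) := by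
  have hb2 : b^2 < 1 := by nlinarith
  set G : ℝ → ℝ → ℝ := fun κ t => 1 / Real.sqrt (max (1 - b^2) (1 - κ^2 * Real.sin t ^ 2))
  have hG : Continuous (Function.uncurry G) := by
    apply continuous_const.div
    · fun_prop
    · rintro ⟨κ, t⟩
      apply (Real.sqrt_pos.2 _).ne'
      calc (0:ℝ) < 1 - b^2 := by linarith
      _ ≤ _ := le_max_left _ _
  have hcont : Continuous fun κ => ∫ t in (0:ℝ)..(Real.pi/2), G κ t :=
    intervalIntegral.continuous_parametric_intervalIntegral_of_continuous' hG 0 (Real.pi/2)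
  apply ContinuousOn.congr (hcont.continuousOn)
  intro κ hκ
  unfold ellK
  apply intervalIntegral.integral_congr
  intro t _
  have : max (1 - b^2) (1 - κ^2 * Real.sin t ^ 2) = 1 - κ^2 * Real.sin t ^ 2 := by
    apply max_eq_right
    have h1 : κ^2 ≤ b^2 := by nlinarith [hκ.1, hκ.2]
    nlinarith [sq_nonneg (Real.sin t), Real.sin_sq_le_one t]
  simp only [G, this]

/-- `κ ↦ √(1+κ²) K(κ)` is strictly increasing on `[0,1)`, equals `π/2` at
`κ = 0`, tends to `+∞` as `κ → 1⁻`; hence for every `γ̃ ∈ (0,1]` there is a unique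
`κ ∈ [0,1)` with `γ̃ = π²/(4K(κ)²(1+κ²))`. -/
theorem statement10 :
    StrictMonoOn (fun κ : ℝ => Real.sqrt (1 + κ^2) * ellK κ) (Set.Ico 0 1) ∧
    Real.sqrt (1 + (0:ℝ)^2) * ellK 0 = Real.pi / 2 ∧
    Filter.Tendsto (fun κ : ℝ => Real.sqrt (1 + κ^2) * ellK κ)
      (nhdsWithin 1 (Set.Iio 1)) Filter.atTop ∧
    ∀ γt : ℝ, 0 < γt → γt ≤ 1 →
      ∃! κ : ℝ, κ ∈ Set.Ico (0:ℝ) 1 ∧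
        γt = Real.pi^2 / (4 * ellK κ^2 * (1 + κ^2)) := by
  refine ⟨fstat_strictMono, ellK_zero, fstat_tendsto, ?_⟩
  intro γt hγ0 hγ1
  have hpi := Real.pi_pos
  set f : ℝ → ℝ := fun κ => Real.sqrt (1 + κ^2) * ellK κ with hf
  set c : ℝ := Real.pi / (2 * Real.sqrt γt) with hcdef
  have hsγ : 0 < Real.sqrt γt := Real.sqrt_pos.2 hγ0
  have hsγ1 : Real.sqrt γt ≤ 1 := Real.sqrt_le_one.2 hγ1
  have hc : Real.pi / 2 ≤ c := by
    rw [hcdef, div_le_div_iff₀ (by norm_num) (by positivity)]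
    nlinarith
  have hc0 : 0 < c := by positivity
  -- key: f κ = c ↔ the equation
  have hkey : ∀ κ ∈ Set.Ico (0:ℝ) 1,
      (γt = Real.pi^2 / (4 * ellK κ^2 * (1 + κ^2)) ↔ f κ = c) := by
    rintro κ ⟨h0, h1⟩
    have hK := ellK_pos h0 h1
    have hfval : (f κ)^2 = (1 + κ^2) * ellK κ^2 := by
      rw [hf]
      simp only [mul_pow]
      rw [Real.sq_sqrt (by positivity)]
    have hfpos : 0 < f κ := by
      rw [hf]
      have : 0 < Real.sqrt (1 + κ^2) := Real.sqrt_pos.2 (by positivity)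
      positivity
    have hc2 : c^2 = Real.pi^2 / (4 * γt) := by
      rw [hcdef]
      rw [div_pow, mul_pow, Real.sq_sqrt hγ0.le]
      norm_num
    constructor
    · intro h
      have hd : γt * (4 * ellK κ^2 * (1 + κ^2)) = Real.pi^2 := by
        rw [h]
        field_simp
      have : (f κ)^2 = c^2 := by
        rw [hfval, hc2, eq_div_iff (by positivity : (4:ℝ) * γt ≠ 0)]
        linear_combination hd
      calc f κ = Real.sqrt ((f κ)^2) := (Real.sqrt_sq hfpos.le).symm
      _ = Real.sqrt (c^2) := by rw [this]
      _ = c := Real.sqrt_sq hc0.le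
    · intro h
      have h2 : (1 + κ^2) * ellK κ^2 = Real.pi^2 / (4 * γt) := by
        rw [← hfval, h, hc2]
      rw [eq_div_iff (by positivity)]
      rw [show (4:ℝ) * ellK κ^2 * (1 + κ^2) = 4 * ((1 + κ^2) * ellK κ^2) by ring, h2]
      field_simp
  -- existence via IVT
  obtain ⟨b, hb, hbc⟩ := fstat_unbounded c
  have hf0 : f 0 = Real.pi / 2 := ellK_zero
  have hcIcc : c ∈ Set.Icc (f 0) (f b) := ⟨hf0 ▸ hc, hbc⟩
  have hfcont : ContinuousOn f (Set.Icc 0 b) := by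
    apply ContinuousOn.mul
    · fun_prop
    · exact ellK_continuousOn hb.1 hb.2
  obtain ⟨κ, hκmem, hκval⟩ := intermediate_value_Icc hb.1 hfcont hcIcc
  have hκIco : κ ∈ Set.Ico (0:ℝ) 1 := ⟨hκmem.1, lt_of_le_of_lt hκmem.2 hb.2⟩
  refine ⟨κ, ⟨hκIco, (hkey κ hκIco).2 hκval⟩, ?_⟩
  rintro κ' ⟨hκ'Ico, hκ'eq⟩
  have h1 : f κ' = c := (hkey κ' hκ'Ico).1 hκ'eq
  exact fstat_strictMono.injOn hκ'Ico hκIco (h1.trans hκval.symm)
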